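/- Let K be a field, R = K[x_0,…,x_n], let I ⊆ J be homogeneous ideals of R, and let A ∈ R be a homogeneous element of degree d such that I :_R (A) = I. Then for every integer t, h_{R/(I + A·J)}(t) = h_{R/I}(t) − h_{R/I}(t − d) + h_{R/J}(t − d). -/

import Mathlib

open MvPolynomial

/-- An ideal of a polynomial ring is homogeneous (with respect to the standard grading)
if it contains all homogeneous components of each of its elements. -/
def Ideal.IsStdHomogeneous {K : Type} [Field K] {n : ℕ}
    (I : Ideal (MvPolynomial (Fin (n + 1)) K)) : Prop :=
  ∀ p ∈ I, ∀ i : ℕ, MvPolynomial.homogeneousComponent i p ∈ I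

/-- The Hilbert function of `R/I`:  `h_{R/I}(t)` is the `K`-dimension of the degree `t`
graded component of `R/I`, i.e. of `R_t/(I ∩ R_t)`; it is `0` in negative degrees. -/
noncomputable def hilbertFn {K : Type} [Field K] {n : ℕ}
    (I : Ideal (MvPolynomial (Fin (n + 1)) K)) (t : ℤ) : ℕ :=
  if t < 0 then 0
  else
    Module.finrank K
      ((MvPolynomial.homogeneousSubmodule (Fin (n + 1)) K t.toNat) ⧸
        Submodule.comap (MvPolynomial.homogeneousSubmodule (Fin (n + 1)) K t.toNat).subtype
          (Submodule.restrictScalars K I))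

section Aux

variable {K : Type} [Field K] {n : ℕ}

noncomputable instance hsFD (m : ℕ) :
    FiniteDimensional K (homogeneousSubmodule (Fin (n + 1)) K m) :=
  Submodule.finiteDimensional_of_le (S₂ := restrictTotalDegree (Fin (n + 1)) K m)
    (fun _ hp => (mem_restrictTotalDegree _ _ _).mpr
      ((mem_homogeneousSubmodule _ _).mp hp).totalDegree_le)

lemma hc_mul_add {σ : Type*} {d : ℕ} {A : MvPolynomial σ K}
    (hA : A.IsHomogeneous d) (q : MvPolynomial σ K) (m : ℕ) :
    homogeneousComponent (d + m) (A * q) = A * homogeneousComponent m q := by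
  conv_lhs => rw [← sum_homogeneousComponent q]
  rw [Finset.mul_sum, map_sum]
  have h : ∀ i : ℕ, homogeneousComponent (d + m) (A * homogeneousComponent i q)
      = if d + m = d + i then A * homogeneousComponent i q else 0 := fun i =>
    homogeneousComponent_of_mem
      ((mem_homogeneousSubmodule _ _).mpr (hA.mul (homogeneousComponent_isHomogeneous i q)))
  simp_rw [h, add_right_inj]
  rw [Finset.sum_ite_eq]
  split_ifs with hm
  · rfl
  · rw [homogeneousComponent_eq_zero, mul_zero]
    simp only [Finset.mem_range, not_lt] at hm
    omega

lemma hc_mul_lt {σ : Type*} {d : ℕ} {A : MvPolynomial σ K}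
    (hA : A.IsHomogeneous d) (q : MvPolynomial σ K) {t : ℕ} (ht : t < d) :
    homogeneousComponent t (A * q) = 0 := by
  conv_lhs => rw [← sum_homogeneousComponent q]
  rw [Finset.mul_sum, map_sum]
  refine Finset.sum_eq_zero fun i _ => ?_
  rw [homogeneousComponent_of_mem
      ((mem_homogeneousSubmodule _ _).mpr (hA.mul (homogeneousComponent_isHomogeneous i q))),
    if_neg (by omega : ¬ t = d + i)]

/-- The degree-`m` part of an ideal, as a subspace of the homogeneous polynomials of
degree `m`. -/
noncomputable def Vsub (I : Ideal (MvPolynomial (Fin (n + 1)) K)) (m : ℕ) :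
    Submodule K (homogeneousSubmodule (Fin (n + 1)) K m) :=
  Submodule.comap (homogeneousSubmodule (Fin (n + 1)) K m).subtype
    (Submodule.restrictScalars K I)

lemma mem_Vsub {I : Ideal (MvPolynomial (Fin (n + 1)) K)} {m : ℕ}
    {x : homogeneousSubmodule (Fin (n + 1)) K m} :
    x ∈ Vsub I m ↔ (x : MvPolynomial (Fin (n + 1)) K) ∈ I := Iff.rfl

lemma hilbertFn_add (I : Ideal (MvPolynomial (Fin (n + 1)) K)) {t : ℤ} (ht : 0 ≤ t) :
    hilbertFn I t + Module.finrank K (Vsub I t.toNat)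
      = Module.finrank K (homogeneousSubmodule (Fin (n + 1)) K t.toNat) := by
  unfold hilbertFn
  rw [if_neg (not_lt.mpr ht)]
  exact Submodule.finrank_quotient_add_finrank _

/-- Multiplication by a homogeneous `A` of degree `d`, as a linear map
from the degree-`m` part to the degree-`d+m` part. -/
noncomputable def mulA {d : ℕ} (A : MvPolynomial (Fin (n + 1)) K) (hA : A.IsHomogeneous d)
    (m : ℕ) : (homogeneousSubmodule (Fin (n + 1)) K m) →ₗ[K]
      (homogeneousSubmodule (Fin (n + 1)) K (d + m)) :=
  (LinearMap.mulLeft K A).restrict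
    (fun _ hx => (mem_homogeneousSubmodule _ _).mpr
      (hA.mul ((mem_homogeneousSubmodule _ _).mp hx)))

lemma mulA_apply {d : ℕ} (A : MvPolynomial (Fin (n + 1)) K) (hA : A.IsHomogeneous d)
    (m : ℕ) (x : homogeneousSubmodule (Fin (n + 1)) K m) :
    (mulA A hA m x : MvPolynomial (Fin (n + 1)) K) = A * x := rfl

lemma mulA_injective {d : ℕ} {A : MvPolynomial (Fin (n + 1)) K} (hA : A.IsHomogeneous d)
    (hA0 : A ≠ 0) (m : ℕ) : Function.Injective (mulA A hA m) := by
  intro x y hxy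
  have h : A * (x : MvPolynomial (Fin (n + 1)) K) = A * y := by
    have := congrArg Subtype.val hxy
    rwa [mulA_apply, mulA_apply] at this
  exact Subtype.ext (mul_left_cancel₀ hA0 h)

end Aux

set_option maxHeartbeats 1000000 in
set_option synthInstance.maxHeartbeats 400000 in
/-- Lemma 3.4(v) (Basic double G-linkage, KMMNP):  if `I ⊆ J` are homogeneous ideals of
`R = K[x_0,…,x_n]` and `A` is a homogeneous element of degree `d` with `I : (A) = I`, then
`h_{R/(I + A·J)}(t) = h_{R/I}(t) − h_{R/I}(t−d) + h_{R/J}(t−d)` for all `t`. -/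
theorem basic_double_link_hilbert_function {K : Type} [Field K] {n : ℕ}
    (I J : Ideal (MvPolynomial (Fin (n + 1)) K))
    (hIJ : I ≤ J) (hI : I.IsStdHomogeneous) (hJ : J.IsStdHomogeneous)
    (d : ℕ) (A : MvPolynomial (Fin (n + 1)) K) (hA : A.IsHomogeneous d)
    (hcolon : Submodule.colon I (Ideal.span {A}) = I) :
    ∀ t : ℤ,
      (hilbertFn (I ⊔ Ideal.span {A} * J) t : ℤ) =
        (hilbertFn I t : ℤ) - hilbertFn I (t - d) + hilbertFn J (t - d) := by
  intro t
  by_cases hA0 : A = 0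
  · -- then `I : (A) = ⊤`, so `I = ⊤`, hence `J = ⊤` and everything vanishes
    have hIT : I = ⊤ := by
      rw [← hcolon]
      rw [eq_top_iff]
      intro x _
      refine Submodule.mem_colon.mpr fun p hp => ?_
      obtain ⟨c, rfl⟩ := Ideal.mem_span_singleton'.mp hp
      rw [hA0, mul_zero, smul_zero]
      exact zero_mem I
    have hJT : J = ⊤ := eq_top_iff.mpr (hIT ▸ hIJ)
    have hST : I ⊔ Ideal.span {A} * J = ⊤ := by rw [hIT]; exact top_sup_eq _
    have htop : ∀ s : ℤ, hilbertFn (⊤ : Ideal (MvPolynomial (Fin (n + 1)) K)) s = 0 := by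
      intro s
      unfold hilbertFn
      split
      · rfl
      · haveI : Subsingleton
            ((MvPolynomial.homogeneousSubmodule (Fin (n + 1)) K s.toNat) ⧸
              Submodule.comap (MvPolynomial.homogeneousSubmodule (Fin (n + 1)) K s.toNat).subtype
                (Submodule.restrictScalars K (⊤ : Ideal (MvPolynomial (Fin (n + 1)) K)))) := by
          rw [Submodule.Quotient.subsingleton_iff]
          simp
        exact Module.finrank_zero_of_subsingleton
    simp [hST, hIT, hJT, htop]
  · by_cases ht : t < 0
    · have ht' : t - d < 0 := by omega
      unfold hilbertFn
      rw [if_pos ht, if_pos ht, if_pos ht', if_pos ht']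
      simp
    · push_neg at ht
      by_cases htd : t < d
      · -- `0 ≤ t < d`: the new ideal agrees with `I` in degree `t`
        have ht' : t - d < 0 := by omega
        have hV : Vsub (I ⊔ Ideal.span {A} * J) t.toNat = Vsub I t.toNat := by
          apply le_antisymm
          · intro x hx
            have hx' : (x : MvPolynomial (Fin (n + 1)) K) ∈ I ⊔ Ideal.span {A} * J :=
              mem_Vsub.mp hx
            obtain ⟨p, hp, z, hz, hpz⟩ := Submodule.mem_sup.mp hx'
            obtain ⟨q, hq, rfl⟩ := Ideal.mem_span_singleton_mul.mp hz
            have hxx : (x : MvPolynomial (Fin (n + 1)) K)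
                = homogeneousComponent t.toNat (x : MvPolynomial (Fin (n + 1)) K) := by
              rw [homogeneousComponent_of_mem x.2, if_pos rfl]
            have hxp : (x : MvPolynomial (Fin (n + 1)) K)
                = homogeneousComponent t.toNat p := by
              conv_lhs => rw [hxx, ← hpz]
              rw [map_add, hc_mul_lt hA q (by omega : t.toNat < d), add_zero]
            exact mem_Vsub.mpr (hxp ▸ hI p hp t.toNat)
          · intro x hx
            exact mem_Vsub.mpr (Ideal.mem_sup_left (mem_Vsub.mp hx))
        have h1 := hilbertFn_add (I ⊔ Ideal.span {A} * J) ht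
        have h2 := hilbertFn_add I ht
        rw [hV] at h1
        unfold hilbertFn at *
        rw [if_pos ht', if_pos ht']
        omega
      · -- main case: `d ≤ t`
        push_neg at htd
        set m : ℕ := (t - d).toNat with hm
        have htd0 : (0 : ℤ) ≤ t - d := by omega
        have htn : t.toNat = d + m := by omega
        set φ := mulA (K := K) (n := n) A hA m with hφ
        have hφinj := mulA_injective hA hA0 m
        -- the degree (d+m) part of I + A·J
        have hVsup : Vsub (I ⊔ Ideal.span {A} * J) (d + m)
            = Vsub I (d + m) ⊔ (Vsub J m).map φ := by
          apply le_antisymm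
          · intro x hx
            have hx' : (x : MvPolynomial (Fin (n + 1)) K) ∈ I ⊔ Ideal.span {A} * J :=
              mem_Vsub.mp hx
            obtain ⟨p, hp, z, hz, hpz⟩ := Submodule.mem_sup.mp hx'
            obtain ⟨q, hq, rfl⟩ := Ideal.mem_span_singleton_mul.mp hz
            have hxx : (x : MvPolynomial (Fin (n + 1)) K)
                = homogeneousComponent (d + m) (x : MvPolynomial (Fin (n + 1)) K) := by
              rw [homogeneousComponent_of_mem x.2, if_pos rfl]
            have hdec : (x : MvPolynomial (Fin (n + 1)) K)
                = homogeneousComponent (d + m) p + A * homogeneousComponent m q := by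
              conv_lhs => rw [hxx, ← hpz]
              rw [map_add, hc_mul_add hA q m]
            refine Submodule.mem_sup.mpr
              ⟨⟨homogeneousComponent (d + m) p, homogeneousComponent_mem _ _⟩,
                mem_Vsub.mpr (hI p hp (d + m)),
                φ ⟨homogeneousComponent m q, homogeneousComponent_mem _ _⟩,
                Submodule.mem_map_of_mem (mem_Vsub.mpr (hJ q hq m)), ?_⟩
            apply Subtype.ext
            rw [Submodule.coe_add, hφ, mulA_apply]
            exact hdec.symm
          · refine sup_le ?_ ?_
            · intro x hx
              exact mem_Vsub.mpr (Ideal.mem_sup_left (mem_Vsub.mp hx))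
            · rintro x ⟨y, hy, rfl⟩
              exact mem_Vsub.mpr (Ideal.mem_sup_right
                (Ideal.mul_mem_mul (Ideal.mem_span_singleton_self A) hy))
        have hVinf : Vsub I (d + m) ⊓ (Vsub J m).map φ = (Vsub I m).map φ := by
          apply le_antisymm
          · rintro x ⟨hxI, y, hyJ, rfl⟩
            have hAy : A * (y : MvPolynomial (Fin (n + 1)) K) ∈ I := hxI
            have hyI : (y : MvPolynomial (Fin (n + 1)) K) ∈ I := by
              rw [← hcolon]
              refine Submodule.mem_colon.mpr fun p hp => ?_
              obtain ⟨c, rfl⟩ := Ideal.mem_span_singleton'.mp hp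
              rw [smul_eq_mul,
                show (y : MvPolynomial (Fin (n + 1)) K) * (c * A)
                  = c * (A * y) by ring]
              exact I.mul_mem_left c hAy
            exact Submodule.mem_map_of_mem (mem_Vsub.mpr hyI)
          · refine le_inf ?_ (Submodule.map_mono fun x hx => mem_Vsub.mpr (hIJ (mem_Vsub.mp hx)))
            rintro x ⟨y, hy, rfl⟩
            exact mem_Vsub.mpr (I.mul_mem_left A (mem_Vsub.mp hy))
        have hsum := Submodule.finrank_sup_add_finrank_inf_eq
          (Vsub I (d + m)) ((Vsub J m).map φ)
        rw [hVinf] at hsum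
        have hmapJ : Module.finrank K ((Vsub J m).map φ) = Module.finrank K (Vsub J m) :=
          ((Submodule.equivMapOfInjective φ hφinj (Vsub J m)).finrank_eq).symm
        have hmapI : Module.finrank K ((Vsub I m).map φ) = Module.finrank K (Vsub I m) :=
          ((Submodule.equivMapOfInjective φ hφinj (Vsub I m)).finrank_eq).symm
        have h1 := hilbertFn_add (I ⊔ Ideal.span {A} * J) ht
        have h2 := hilbertFn_add I ht
        have h3 := hilbertFn_add I htd0
        have h4 := hilbertFn_add J htd0
        rw [htn] at h1 h2
        rw [← hm] at h3 h4
        rw [hVsup] at h1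
        omega
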